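/- A Runge–Kutta method satisfying the algebraic stability condition Mᵢⱼ = bᵢ Aᵢⱼ + bⱼ Aⱼᵢ − bᵢ bⱼ ≥ 0 (as a positive semidefinite matrix) with bᵢ ≥ 0, applied to the linear test equation y' = λy with Re(λ) ≤ 0, produces |y^{n+1}| ≤ |yⁿ| for any step size Δt > 0. -/

import Mathlib

open Matrix

/-- Algebraic stability: if `Mᵢⱼ = bᵢAᵢⱼ + bⱼAⱼᵢ − bᵢbⱼ` is positive semidefinite and
`bᵢ ≥ 0`, then on the test equation `y' = λy` with `Re λ ≤ 0` the RK method is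
contractive: `|y^{n+1}| ≤ |yⁿ|`. -/
theorem algebraically_stable_contractive {s : ℕ} (A : Matrix (Fin s) (Fin s) ℝ)
    (b : Fin s → ℝ) (hb : ∀ i, 0 ≤ b i)
    (hM : (Matrix.of fun i j => b i * A i j + b j * A j i - b i * b j :
        Matrix (Fin s) (Fin s) ℝ).PosSemidef)
    (lam : ℂ) (hlam : lam.re ≤ 0) (Δt : ℝ) (hΔt : 0 < Δt)
    (yn y1 : ℂ) (k : Fin s → ℂ)
    (hstage : ∀ i, k i = lam * (yn + Δt * ∑ j, A i j * k j))
    (hupdate : y1 = yn + Δt * ∑ i, b i * k i) :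
    ‖y1‖ ≤ ‖yn‖ := by
  set g : Fin s → ℂ := fun i => yn + Δt * ∑ j, A i j * k j with hg
  set R : Fin s → Fin s → ℝ := fun i j => (k i * (starRingEnd ℂ) (k j)).re with hRdef
  have hRsymm : ∀ i j, R i j = R j i := by
    intro i j
    simp [hRdef, Complex.mul_re, Complex.conj_re, Complex.conj_im]
    ring
  -- R i j = uᵢuⱼ + vᵢvⱼ
  have hRuv : ∀ i j, R i j = (k i).re * (k j).re + (k i).im * (k j).im := by
    intro i j
    simp [hRdef, Complex.mul_re, Complex.conj_re, Complex.conj_im]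
  -- the quadratic form is nonneg
  have hQ : 0 ≤ ∑ i, ∑ j, (b i * A i j + b j * A j i - b i * b j) * R i j := by
    have key : ∀ x : Fin s → ℝ,
        0 ≤ ∑ i, ∑ j, (b i * A i j + b j * A j i - b i * b j) * (x i * x j) := by
      intro x
      have := hM.dotProduct_mulVec_nonneg x
      simpa [dotProduct, Matrix.mulVec, Finset.mul_sum, mul_assoc,
        mul_left_comm, mul_comm] using this
    have h1 := key (fun i => (k i).re)
    have h2 := key (fun i => (k i).im)
    have : ∑ i, ∑ j, (b i * A i j + b j * A j i - b i * b j) * R i j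
        = (∑ i, ∑ j, (b i * A i j + b j * A j i - b i * b j) * ((k i).re * (k j).re))
        + ∑ i, ∑ j, (b i * A i j + b j * A j i - b i * b j) * ((k i).im * (k j).im) := by
      rw [← Finset.sum_add_distrib]
      refine Finset.sum_congr rfl fun i _ => ?_
      rw [← Finset.sum_add_distrib]
      refine Finset.sum_congr rfl fun j _ => ?_
      rw [hRuv]; ring
    rw [this]; positivity
  -- stage: yn in terms of g, k i = lam * g i
  have hk : ∀ i, k i = lam * g i := fun i => hstage i
  have hyn : ∀ i, yn = g i - Δt * ∑ j, A i j * k j := by intro i; rw [hg]; ring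
  -- (yn * conj (k i)).re
  have hE2 : ∀ i, (yn * (starRingEnd ℂ) (k i)).re
      = lam.re * Complex.normSq (g i) - Δt * ∑ j, A i j * R j i := by
    intro i
    rw [hyn i, sub_mul, Complex.sub_re]
    congr 1
    · rw [hk i]
      have : g i * (starRingEnd ℂ) (lam * g i) = (starRingEnd ℂ) lam * (g i * (starRingEnd ℂ) (g i)) := by
        rw [_root_.map_mul]; ring
      rw [this, Complex.mul_conj]
      simp [Complex.mul_re]
    · have : (↑Δt * ∑ j, ↑(A i j) * k j) * (starRingEnd ℂ) (k i)
          = ↑Δt * ∑ j, ↑(A i j) * (k j * (starRingEnd ℂ) (k i)) := by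
        rw [Finset.mul_sum, Finset.sum_mul, Finset.mul_sum]
        refine Finset.sum_congr rfl fun j _ => ?_
        ring
      rw [this]
      simp [Complex.mul_re, Complex.re_sum, Complex.ofReal_mul, hRdef, Finset.mul_sum]
  -- helper: re of products with real-weighted sums
  have hre : ∀ (c : Fin s → ℝ) (z : ℂ), (z * (starRingEnd ℂ) (∑ i, (c i : ℂ) * k i)).re
      = ∑ i, c i * (z * (starRingEnd ℂ) (k i)).re := by
    intro c z
    rw [map_sum, Finset.mul_sum, Complex.re_sum]
    refine Finset.sum_congr rfl fun i _ => ?_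
    rw [_root_.map_mul, Complex.conj_ofReal,
      show z * (↑(c i) * (starRingEnd ℂ) (k i)) = ↑(c i) * (z * (starRingEnd ℂ) (k i)) by ring,
      Complex.re_ofReal_mul]
  have hre2 : ∀ (w : ℂ), ((∑ i, ((b i : ℂ)) * k i) * (starRingEnd ℂ) w).re
      = ∑ i, b i * (k i * (starRingEnd ℂ) w).re := by
    intro w
    rw [Finset.sum_mul, Complex.re_sum]
    refine Finset.sum_congr rfl fun i _ => ?_
    rw [mul_assoc, Complex.re_ofReal_mul]
  -- expansion of normSq y1
  set S : ℂ := ∑ i, (b i : ℂ) * k i with hS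
  have hnSq : Complex.normSq y1 = Complex.normSq yn
      + 2 * Δt * (∑ i, b i * (yn * (starRingEnd ℂ) (k i)).re)
      + Δt ^ 2 * (∑ i, b i * ∑ j, b j * R j i) := by
    rw [hupdate, Complex.normSq_add, Complex.normSq_mul, Complex.normSq_ofReal]
    have e1 : (yn * (starRingEnd ℂ) ((Δt : ℂ) * S)).re
        = Δt * (∑ i, b i * (yn * (starRingEnd ℂ) (k i)).re) := by
      rw [_root_.map_mul, Complex.conj_ofReal,
        show yn * ((Δt : ℂ) * (starRingEnd ℂ) S) = (Δt : ℂ) * (yn * (starRingEnd ℂ) S) by ring,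
        Complex.re_ofReal_mul, hS, hre]
    have e2 : Complex.normSq S = ∑ i, b i * ∑ j, b j * R j i := by
      have : Complex.normSq S = (S * (starRingEnd ℂ) S).re := by
        rw [Complex.mul_conj, Complex.ofReal_re]
      rw [this]
      conv_lhs => rw [show S * (starRingEnd ℂ) S = S * (starRingEnd ℂ) (∑ i, ((b i : ℂ)) * k i) by rw [hS]]
      rw [hre]
      refine Finset.sum_congr rfl fun i _ => ?_
      congr 1
      rw [hS, hre2]
    rw [e1, e2]
    ring
  -- substitute hE2
  have hnSq2 : Complex.normSq y1 = Complex.normSq yn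
      + 2 * Δt * lam.re * (∑ i, b i * Complex.normSq (g i))
      - 2 * Δt ^ 2 * (∑ i, ∑ j, b i * A i j * R j i)
      + Δt ^ 2 * (∑ i, ∑ j, b i * b j * R j i) := by
    rw [hnSq]
    have : (∑ i, b i * (yn * (starRingEnd ℂ) (k i)).re)
        = lam.re * (∑ i, b i * Complex.normSq (g i))
          - Δt * (∑ i, ∑ j, b i * A i j * R j i) := by
      rw [Finset.mul_sum, Finset.mul_sum, ← Finset.sum_sub_distrib]
      refine Finset.sum_congr rfl fun i _ => ?_
      rw [hE2 i, Finset.mul_sum, Finset.mul_sum]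
      rw [mul_sub]
      congr 1
      · ring
      · rw [Finset.mul_sum]
        refine Finset.sum_congr rfl fun j _ => ?_
        ring
    rw [this]
    have : (∑ i, b i * ∑ j, b j * R j i) = ∑ i, ∑ j, b i * b j * R j i := by
      refine Finset.sum_congr rfl fun i _ => ?_
      rw [Finset.mul_sum]
      refine Finset.sum_congr rfl fun j _ => ?_
      ring
    rw [this]
    ring
  -- identify the M-quadratic form
  have hQeq : (∑ i, ∑ j, (b i * A i j + b j * A j i - b i * b j) * R i j)
      = 2 * (∑ i, ∑ j, b i * A i j * R j i) - (∑ i, ∑ j, b i * b j * R j i) := by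
    have step : ∀ i, (∑ j, (b i * A i j + b j * A j i - b i * b j) * R i j)
        = (∑ j, b i * A i j * R i j) + (∑ j, b j * A j i * R i j) - (∑ j, b i * b j * R i j) := by
      intro i
      simp only [← Finset.sum_add_distrib, ← Finset.sum_sub_distrib]
      exact Finset.sum_congr rfl fun j _ => by ring
    calc (∑ i, ∑ j, (b i * A i j + b j * A j i - b i * b j) * R i j)
        = ∑ i, ((∑ j, b i * A i j * R i j) + (∑ j, b j * A j i * R i j) - (∑ j, b i * b j * R i j)) :=
          Finset.sum_congr rfl fun i _ => step i
      _ = (∑ i, ∑ j, b i * A i j * R i j) + (∑ i, ∑ j, b j * A j i * R i j)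
          - (∑ i, ∑ j, b i * b j * R i j) := by
          rw [Finset.sum_sub_distrib, Finset.sum_add_distrib]
      _ = 2 * (∑ i, ∑ j, b i * A i j * R j i) - (∑ i, ∑ j, b i * b j * R j i) := by
          have c1 : (∑ i, ∑ j, b i * A i j * R i j) = ∑ i, ∑ j, b i * A i j * R j i :=
            Finset.sum_congr rfl fun i _ => Finset.sum_congr rfl fun j _ => by rw [hRsymm]
          have c2 : (∑ i, ∑ j, b j * A j i * R i j) = ∑ i, ∑ j, b i * A i j * R j i :=
            Finset.sum_comm
          have c3 : (∑ i, ∑ j, b i * b j * R i j) = ∑ i, ∑ j, b i * b j * R j i :=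
            Finset.sum_congr rfl fun i _ => Finset.sum_congr rfl fun j _ => by rw [hRsymm]
          rw [c1, c2, c3]; ring
  -- the dissipative term
  have hdiss : 2 * Δt * lam.re * (∑ i, b i * Complex.normSq (g i)) ≤ 0 := by
    have hnn : 0 ≤ ∑ i, b i * Complex.normSq (g i) :=
      Finset.sum_nonneg fun i _ => mul_nonneg (hb i) (Complex.normSq_nonneg _)
    have : lam.re * (∑ i, b i * Complex.normSq (g i)) ≤ 0 := mul_nonpos_of_nonpos_of_nonneg hlam hnn
    nlinarith
  -- conclude
  have hfin : Complex.normSq y1 ≤ Complex.normSq yn := by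
    rw [hnSq2]
    have hQ' : 0 ≤ 2 * (∑ i, ∑ j, b i * A i j * R j i) - (∑ i, ∑ j, b i * b j * R j i) := by
      rw [← hQeq]; exact hQ
    nlinarith [sq_nonneg Δt, hΔt]
  rw [Complex.norm_def, Complex.norm_def]
  exact Real.sqrt_le_sqrt hfin
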